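/- Let R = ⊕_{m∈ℤ} R_m be a ℤ-graded associative algebra over a field k, and let D be a locally nilpotent k-linear derivation of R admitting a decomposition D = D_p + D_{p+1} + ... + D_q (p ≤ q), where each D_i is a k-linear map satisfying D_i(R_m) ⊆ R_{i+m} for all m ∈ ℤ, and D_q ≠ 0. Then D_q is locally nilpotent, i.e., for every a ∈ R there exists a natural number m with D_q^m(a) = 0. -/

import Mathlib

/-- Let `R = ⊕_{m ∈ ℤ} R_m` be a ℤ-graded associative algebra over a field `k` and let
`D` be a locally nilpotent `k`-linear derivation of `R` admitting a decomposition
`D = D_p + ⋯ + D_q` with `D_i (R_m) ⊆ R_{i+m}` for all `m` and `D_q ≠ 0`.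
Then `D_q` is locally nilpotent. -/
theorem highest_component_of_locally_nilpotent_derivation_is_locally_nilpotent
    {k R : Type*} [Field k] [Ring R] [Algebra k R]
    (𝒜 : ℤ → Submodule k R)
    (hdirect : DirectSum.IsInternal 𝒜)
    (hmul : ∀ (m n : ℤ), ∀ a ∈ 𝒜 m, ∀ b ∈ 𝒜 n, a * b ∈ 𝒜 (m + n))
    (D : R →ₗ[k] R)
    (hder : ∀ a b : R, D (a * b) = D a * b + a * D b)
    (hln : ∀ a : R, ∃ m : ℕ, (D ^ m) a = 0)
    (p q : ℤ) (hpq : p ≤ q)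
    (Dc : ℤ → (R →ₗ[k] R))
    (hdecomp : D = ∑ i ∈ Finset.Icc p q, Dc i)
    (hgraded : ∀ i ∈ Finset.Icc p q, ∀ (m : ℤ), ∀ a ∈ 𝒜 m, Dc i a ∈ 𝒜 (i + m))
    (hne : Dc q ≠ 0) :
    ∀ a : R, ∃ m : ℕ, (Dc q ^ m) a = 0 := by
  classical
  set Q := Dc q with hQ
  -- submodule of "low degree" elements
  set S : ℤ → Submodule k R := fun N => ⨆ j : {j : ℤ // j < N}, 𝒜 j.1 with hS
  have hA_le_S : ∀ {j N : ℤ}, j < N → 𝒜 j ≤ S N := fun {j N} h =>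
    le_iSup_of_le (⟨j, h⟩ : {j : ℤ // j < N}) le_rfl
  have hq : q ∈ Finset.Icc p q := Finset.mem_Icc.mpr ⟨hpq, le_rfl⟩
  have hD_S : ∀ N : ℤ, ∀ x ∈ S N, D x ∈ S (N + q) := by
    intro N x hx
    have hmap : Submodule.map D (S N) ≤ S (N + q) := by
      rw [hS]
      simp only [Submodule.map_iSup]
      refine iSup_le fun j => ?_
      rintro _ ⟨a, ha, rfl⟩
      rw [hdecomp]
      simp only [LinearMap.coe_sum, Finset.sum_apply]
      refine Submodule.sum_mem _ fun i hi => ?_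
      have hi2 := (Finset.mem_Icc.mp hi).2
      have hj := j.2
      exact hA_le_S (by omega) (hgraded i hi j.1 a ha)
    exact hmap ⟨x, hx, rfl⟩
  -- key claim
  have key : ∀ (m : ℤ) (a : R), a ∈ 𝒜 m → ∀ n : ℕ,
      (Q ^ n) a ∈ 𝒜 ((n : ℤ) * q + m) ∧ (D ^ n) a - (Q ^ n) a ∈ S ((n : ℤ) * q + m) := by
    intro m a ha n
    induction n with
    | zero => exact ⟨by simpa using ha, by simp⟩
    | succ n ih =>
      obtain ⟨h1, h2⟩ := ih
      have hdeg : ((n + 1 : ℕ) : ℤ) * q + m = q + ((n : ℤ) * q + m) := by push_cast; ring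
      constructor
      · rw [hdeg, pow_succ', Module.End.mul_apply]
        exact hgraded q hq _ _ h1
      · have hr : D ((D ^ n) a - (Q ^ n) a) ∈ S (((n : ℤ) * q + m) + q) := hD_S _ _ h2
        have hsum : D ((Q ^ n) a) - Q ((Q ^ n) a) ∈ S (((n : ℤ) * q + m) + q) := by
          rw [hdecomp]
          simp only [LinearMap.coe_sum, Finset.sum_apply]
          rw [← Finset.sum_erase_add _ _ hq, hQ, add_sub_cancel_right]
          refine Submodule.sum_mem _ fun i hi => ?_
          have hi' := Finset.mem_erase.mp hi
          have hi2 := (Finset.mem_Icc.mp hi'.2).2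
          have hine := hi'.1
          exact hA_le_S (by omega) (hgraded i hi'.2 _ _ h1)
        have eqn : (D ^ (n + 1)) a - (Q ^ (n + 1)) a =
            D ((D ^ n) a - (Q ^ n) a) + (D ((Q ^ n) a) - Q ((Q ^ n) a)) := by
          rw [pow_succ', pow_succ', Module.End.mul_apply, Module.End.mul_apply, map_sub]
          abel
        rw [eqn]
        have : ((n + 1 : ℕ) : ℤ) * q + m = ((n : ℤ) * q + m) + q := by push_cast; ring
        rw [this]
        exact Submodule.add_mem _ hr hsum
  -- homogeneous elements are killed
  have hom : ∀ (m : ℤ) (a : R), a ∈ 𝒜 m → ∃ n : ℕ, (Q ^ n) a = 0 := by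
    intro m a ha
    obtain ⟨n, hn⟩ := hln a
    obtain ⟨h1, h2⟩ := key m a ha n
    rw [hn, zero_sub] at h2
    have h2' : (Q ^ n) a ∈ S ((n : ℤ) * q + m) := by
      have := Submodule.neg_mem _ h2
      simpa using this
    set N := (n : ℤ) * q + m
    have hdisj : Disjoint (𝒜 N) (⨆ j ≠ N, 𝒜 j) := hdirect.submodule_iSupIndep N
    have hle : S N ≤ ⨆ j ≠ N, 𝒜 j := by
      refine iSup_le fun j => ?_
      have hj := j.2
      exact le_iSup_of_le j.1 (le_iSup_of_le (by omega) le_rfl)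
    have : (Q ^ n) a ∈ (⊥ : Submodule k R) :=
      hdisj.le_bot ⟨h1, hle h2'⟩
    exact ⟨n, Submodule.mem_bot k |>.mp this⟩
  -- extend to all of R via the submodule of locally nilpotent elements
  let T : Submodule k R :=
    { carrier := {a | ∃ n : ℕ, (Q ^ n) a = 0}
      add_mem' := by
        rintro a b ⟨n, hn⟩ ⟨n', hn'⟩
        refine ⟨n + n', ?_⟩
        rw [map_add]
        have h1 : (Q ^ (n + n')) a = 0 := by
          rw [add_comm, pow_add, Module.End.mul_apply, hn, map_zero]
        have h2 : (Q ^ (n + n')) b = 0 := by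
          rw [pow_add, Module.End.mul_apply, hn', map_zero]
        rw [h1, h2, add_zero]
      zero_mem' := ⟨0, by simp⟩
      smul_mem' := by
        rintro c a ⟨n, hn⟩
        exact ⟨n, by rw [map_smul, hn, smul_zero]⟩ }
  intro a
  have hT : ∀ m : ℤ, 𝒜 m ≤ T := fun m x hx => hom m x hx
  have htop : (⨆ m, 𝒜 m) = ⊤ := hdirect.submodule_iSup_eq_top
  have : a ∈ T := (iSup_le hT : (⨆ m, 𝒜 m) ≤ T) (htop.symm ▸ Submodule.mem_top)
  exact this
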